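/- arXiv:2207.08573 — 4 statements merged into one kernel-verified Lean document; each statement's English description precedes it below -/
import Mathlib

section
/- If I is an ideal of a polynomial ring R = K[x_1,...,x_N] over a field K generated by polynomials f_1,...,f_n such that, with respect to a fixed monomial order <, the initial term of each f_j is a nonzero scalar multiple of a distinct indeterminate x_{i_j}, and x_{i_j} does not appear in any term of f_m for m > j, then {f_1,...,f_n} is a Gröbner basis of I with respect to <, and the initial ideal in_<(I) is generated by the indeterminates x_{i_1},...,x_{i_n}. -/
open MvPolynomial
open Pointwise

/-- `le` is a monomial order on the monomials of `K[x_1,…,x_N]`: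
a linear order, with `0` least, compatible with addition of exponent vectors. -/
def IsMonomialOrder {N : ℕ} (le : (Fin N →₀ ℕ) → (Fin N →₀ ℕ) → Prop) : Prop :=
  IsLinearOrder (Fin N →₀ ℕ) le ∧ (∀ a, le 0 a) ∧ ∀ a b c, le a b → le (a + c) (b + c)

/-- `m` is the leading monomial of `f` with respect to `le`. -/
def IsLeadMono {K : Type*} [Field K] {N : ℕ}
    (le : (Fin N →₀ ℕ) → (Fin N →₀ ℕ) → Prop)
    (f : MvPolynomial (Fin N) K) (m : Fin N →₀ ℕ) : Prop :=
  m ∈ f.support ∧ ∀ m' ∈ f.support, le m' m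

/-- The initial ideal of `I` with respect to `le`: the ideal generated by the
leading terms of the (nonzero) elements of `I`. -/
noncomputable def initialIdeal {K : Type*} [Field K] {N : ℕ}
    (le : (Fin N →₀ ℕ) → (Fin N →₀ ℕ) → Prop)
    (I : Ideal (MvPolynomial (Fin N) K)) : Ideal (MvPolynomial (Fin N) K) :=
  Ideal.span {t | ∃ g ∈ I, ∃ m, IsLeadMono le g m ∧
    t = MvPolynomial.monomial m (MvPolynomial.coeff m g)}

section Aux
variable {K : Type*} [Field K] {N : ℕ}
variable {le : (Fin N →₀ ℕ) → (Fin N →₀ ℕ) → Prop}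

/-- If no monomial of `p` involves the variable `i`, then substituting for `x_i` fixes `p`. -/
lemma aux_aeval_fix (i : Fin N) (q p : MvPolynomial (Fin N) K)
    (h : ∀ d ∈ p.support, d i = 0) :
    aeval (Function.update X i q) p = p := by
  have key : ∀ μ ∈ p.support, aeval (Function.update X i q) (monomial μ (coeff μ p))
      = monomial μ (coeff μ p) := by
    intro μ hμ
    rw [aeval_monomial, algebraMap_eq, monomial_eq]
    congr 1
    refine Finsupp.prod_congr fun k hk => ?_
    rw [Function.update_of_ne]
    rintro rfl
    exact (Finsupp.mem_support_iff.mp hk) (h μ hμ)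
  conv_lhs => rw [p.as_sum]
  rw [map_sum]
  conv_rhs => rw [p.as_sum]
  exact Finset.sum_congr rfl key

lemma aux_pow_support (hle : IsMonomialOrder le) (i : Fin N) (q : MvPolynomial (Fin N) K)
    (hq : ∀ ν ∈ q.support, le ν (Finsupp.single i 1)) (a : ℕ) :
    ∀ ν ∈ (q ^ a).support, le ν (Finsupp.single i a) := by
  classical
  obtain ⟨hlin, hzero, hadd⟩ := hle
  haveI := hlin
  induction a with
  | zero =>
    intro ν hν
    rw [pow_zero] at hν
    have hν0 : ν = 0 := by
      have := MvPolynomial.mem_support_iff.mp hν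
      rw [MvPolynomial.coeff_one] at this
      by_contra h'
      rw [if_neg (by simpa [eq_comm] using h')] at this
      exact this rfl
    simpa [hν0] using hzero (Finsupp.single i 0)
  | succ a ih =>
    intro ν hν
    have hν' : ν ∈ (q ^ a).support + q.support := by
      refine MvPolynomial.support_mul _ _ ?_
      rw [← pow_succ]; exact hν
    rw [Finset.mem_add] at hν'
    obtain ⟨ν₁, h₁, ν₂, h₂, rfl⟩ := hν'
    have s1 : le (ν₁ + ν₂) (Finsupp.single i a + ν₂) := hadd _ _ _ (ih ν₁ h₁)
    have s2 : le (Finsupp.single i a + ν₂) (Finsupp.single i a + Finsupp.single i 1) := by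
      have := hadd _ _ (Finsupp.single i a) (hq ν₂ h₂)
      rwa [add_comm ν₂, add_comm (Finsupp.single i 1)] at this
    have s3 : le (ν₁ + ν₂) (Finsupp.single i a + Finsupp.single i 1) := trans_of le s1 s2
    rwa [← Finsupp.single_add] at s3

lemma aux_aeval_mono_support (hle : IsMonomialOrder le) (v : Fin N → MvPolynomial (Fin N) K)
    (hv : ∀ k, ∀ ν ∈ (v k).support, le ν (Finsupp.single k 1)) (c : K) (μ : Fin N →₀ ℕ) :
    ∀ ν ∈ (aeval v (monomial μ c)).support, le ν μ := by
  classical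
  obtain ⟨hlin, hzero, hadd⟩ := hle
  haveI := hlin
  induction μ using Finsupp.induction with
  | zero =>
    intro ν hν
    have : aeval v (monomial (0 : Fin N →₀ ℕ) c) = C c := by
      rw [aeval_monomial, algebraMap_eq, Finsupp.prod_zero_index, mul_one]
    rw [this] at hν
    have := MvPolynomial.mem_support_iff.mp hν
    rw [MvPolynomial.coeff_C] at this
    have hν0 : ν = 0 := by
      by_contra h'
      rw [if_neg (by simpa [eq_comm] using h')] at this
      exact this rfl
    subst hν0; exact hzero 0
  | single_add k a μ' hkμ ha0 ih =>
    intro ν hν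
    have hsplit : (monomial (Finsupp.single k a + μ') c : MvPolynomial (Fin N) K)
        = monomial (Finsupp.single k a) 1 * monomial μ' c := by
      rw [monomial_mul, one_mul]
    have hpow : aeval v (monomial (Finsupp.single k a) (1 : K)) = v k ^ a := by
      rw [aeval_monomial, algebraMap_eq, map_one, one_mul,
        Finsupp.prod_single_index (by rw [pow_zero])]
    rw [hsplit, map_mul, hpow] at hν
    have hν' := MvPolynomial.support_mul _ _ hν
    rw [Finset.mem_add] at hν'
    obtain ⟨ν₁, h₁, ν₂, h₂, rfl⟩ := hν'
    have b₁ : le ν₁ (Finsupp.single k a) :=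
      aux_pow_support ⟨hlin, hzero, hadd⟩ k (v k) (hv k) a ν₁ h₁
    have b₂ : le ν₂ μ' := ih ν₂ h₂
    have s1 : le (ν₁ + ν₂) (Finsupp.single k a + ν₂) := hadd _ _ _ b₁
    have s2 : le (Finsupp.single k a + ν₂) (Finsupp.single k a + μ') := by
      have := hadd _ _ (Finsupp.single k a) b₂
      rwa [add_comm ν₂, add_comm μ'] at this
    exact trans_of le s1 s2

lemma aux_aeval_support (hle : IsMonomialOrder le) (v : Fin N → MvPolynomial (Fin N) K)
    (hv : ∀ k, ∀ ν ∈ (v k).support, le ν (Finsupp.single k 1)) (p : MvPolynomial (Fin N) K) :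
    ∀ ν ∈ (aeval v p).support, ∃ μ ∈ p.support, le ν μ := by
  intro ν hν
  have h0 := MvPolynomial.mem_support_iff.mp hν
  rw [p.as_sum, map_sum, MvPolynomial.coeff_sum] at h0
  obtain ⟨μ, hμ, hμ'⟩ := Finset.exists_ne_zero_of_sum_ne_zero h0
  exact ⟨μ, hμ, aux_aeval_mono_support hle v hv _ μ ν (MvPolynomial.mem_support_iff.mpr hμ')⟩

lemma aux_aeval_sub_mem (v : Fin N → MvPolynomial (Fin N) K) (p : MvPolynomial (Fin N) K) :
    aeval v p - p ∈ Ideal.span (Set.range fun k => v k - X k) := by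
  induction p using MvPolynomial.induction_on with
  | C a => rw [aeval_C, algebraMap_eq, sub_self]; exact zero_mem _
  | add p q hp hq =>
    have : aeval v (p + q) - (p + q) = (aeval v p - p) + (aeval v q - q) := by
      rw [map_add]; ring
    rw [this]; exact add_mem hp hq
  | mul_X p k hp =>
    have : aeval v (p * X k) - p * X k
        = aeval v p * (v k - X k) + (aeval v p - p) * X k := by
      rw [map_mul, aeval_X]; ring
    rw [this]
    exact add_mem (Ideal.mul_mem_left _ _ (Ideal.subset_span ⟨k, rfl⟩))
      (Ideal.mul_mem_right _ _ hp)

end Aux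

/-- Iterated elimination substitutions. -/
noncomputable def auxPhi {K : Type*} [Field K] {N n : ℕ}
    (φ : Fin n → (MvPolynomial (Fin N) K →ₐ[K] MvPolynomial (Fin N) K)) :
    ℕ → (MvPolynomial (Fin N) K →ₐ[K] MvPolynomial (Fin N) K)
  | 0 => AlgHom.id K _
  | (k+1) => if h : k < n then (φ ⟨k, h⟩).comp (auxPhi φ k) else auxPhi φ k

/-- triangular complete intersections have Gröbner bases of the
given generators, with initial ideal an ideal of indeterminates.
If the leading term of each `f j` is `u j • x_{idx j}` for distinct indeterminates
`x_{idx j}`, and `x_{idx j}` does not appear in any term of `f m` for `m > j`, then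
the `f j` form a Gröbner basis of the ideal `I` they generate (the leading terms of
the `f j` generate the initial ideal of `I`), and `in_<(I)` is generated by the
indeterminates `x_{idx j}`. -/
theorem stmt0 {K : Type*} [Field K] {N n : ℕ}
    (le : (Fin N →₀ ℕ) → (Fin N →₀ ℕ) → Prop)
    (hle : IsMonomialOrder le)
    (f : Fin n → MvPolynomial (Fin N) K)
    (idx : Fin n → Fin N) (hinj : Function.Injective idx)
    (u : Fin n → K) (hu : ∀ j, u j ≠ 0)
    (hlead : ∀ j, IsLeadMono le (f j) (Finsupp.single (idx j) 1) ∧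
      MvPolynomial.coeff (Finsupp.single (idx j) 1) (f j) = u j)
    (hnot : ∀ j m : Fin n, j < m → ∀ d ∈ (f m).support, d (idx j) = 0)
    (I : Ideal (MvPolynomial (Fin N) K)) (hI : I = Ideal.span (Set.range f)) :
    initialIdeal le I =
      Ideal.span (Set.range fun j =>
        MvPolynomial.monomial (Finsupp.single (idx j) 1) (u j)) ∧
    initialIdeal le I =
      Ideal.span (Set.range fun j => (MvPolynomial.X (idx j) : MvPolynomial (Fin N) K)) := by
  classical
  obtain ⟨hlin, hzero, hadd⟩ := hle
  haveI := hlin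
  set t : Fin n → MvPolynomial (Fin N) K :=
    fun j => f j - monomial (Finsupp.single (idx j) 1) (u j) with ht_def
  have hfj : ∀ j, f j ∈ I := fun j => hI ▸ Ideal.subset_span ⟨j, rfl⟩
  have hf_eq : ∀ j, f j = monomial (Finsupp.single (idx j) 1) (u j) + t j := by
    intro j; rw [ht_def]; ring
  have ht_supp : ∀ j, ∀ ν ∈ (t j).support, ν ∈ (f j).support ∧ ν ≠ Finsupp.single (idx j) 1 := by
    intro j ν hν
    have hc := MvPolynomial.mem_support_iff.mp hν
    have hne : ν ≠ Finsupp.single (idx j) 1 := by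
      rintro rfl
      apply hc
      rw [ht_def]
      simp [MvPolynomial.coeff_sub, coeff_monomial, (hlead j).2]
    refine ⟨MvPolynomial.mem_support_iff.mpr ?_, hne⟩
    intro h0
    apply hc
    rw [ht_def]
    simp only [MvPolynomial.coeff_sub, coeff_monomial, if_neg (Ne.symm hne), h0, sub_zero]
  have ht_le : ∀ j, ∀ ν ∈ (t j).support, le ν (Finsupp.single (idx j) 1) :=
    fun j ν hν => (hlead j).1.2 ν (ht_supp j ν hν).1
  have ht_zero : ∀ (k j : Fin n), k ≤ j → ∀ ν ∈ (t j).support, ν (idx k) = 0 := by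
    intro k j hkj ν hν
    rcases lt_or_eq_of_le hkj with h | rfl
    · exact hnot k j h ν (ht_supp j ν hν).1
    · by_contra h0
      have h1 : (1 : ℕ) ≤ ν (idx k) := Nat.one_le_iff_ne_zero.mpr h0
      have hle1 : Finsupp.single (idx k) 1 ≤ ν := Finsupp.single_le_iff.mpr h1
      have hgt : le (Finsupp.single (idx k) 1) ν := by
        have := hadd 0 (ν - Finsupp.single (idx k) 1) (Finsupp.single (idx k) 1) (hzero _)
        rwa [zero_add, add_comm, add_tsub_cancel_of_le hle1] at this
      exact (ht_supp k ν hν).2 (antisymm_of le (ht_le k ν hν) hgt)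
  set v : Fin n → Fin N → MvPolynomial (Fin N) K :=
    fun j => Function.update X (idx j) ((-(u j)⁻¹) • t j) with hv_def
  set φ : Fin n → (MvPolynomial (Fin N) K →ₐ[K] MvPolynomial (Fin N) K) :=
    fun j => aeval (v j) with hφ_def
  have hv : ∀ j k, ∀ ν ∈ (v j k).support, le ν (Finsupp.single k 1) := by
    intro j k ν hν
    by_cases hk : k = idx j
    · subst hk
      rw [hv_def] at hν
      simp only [Function.update_self] at hν
      exact ht_le j ν (MvPolynomial.support_smul hν)
    · rw [hv_def] at hν
      simp only [Function.update_of_ne hk] at hν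
      rw [support_X, Finset.mem_singleton] at hν
      subst hν; exact refl_of le _
  have hφf : ∀ j, φ j (f j) = 0 := by
    intro j
    have h1 : φ j (t j) = t j := by
      rw [hφ_def, hv_def]
      exact aux_aeval_fix (idx j) _ (t j) (ht_zero j j le_rfl)
    have h2 : φ j (monomial (Finsupp.single (idx j) 1) (u j)) = - t j := by
      rw [hφ_def]
      rw [show (aeval (v j)) (monomial (Finsupp.single (idx j) 1) (u j))
          = C (u j) * (v j (idx j)) ^ 1 by
        rw [aeval_monomial, algebraMap_eq, Finsupp.prod_single_index (by rw [pow_zero])]]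
      rw [pow_one, hv_def]
      simp only [Function.update_self]
      rw [MvPolynomial.smul_eq_C_mul, ← mul_assoc, ← C_mul]
      rw [show u j * -(u j)⁻¹ = -1 by
        rw [mul_neg, mul_inv_cancel₀ (hu j)]]
      simp
    rw [hf_eq j, map_add, h2, h1, neg_add_cancel]
  have hvI : ∀ j, Set.range (fun k => v j k - X k) ⊆ (I : Set (MvPolynomial (Fin N) K)) := by
    rintro j _ ⟨k, rfl⟩
    by_cases hk : k = idx j
    · subst hk
      have hXm : (monomial (Finsupp.single (idx j) 1) (u j) : MvPolynomial (Fin N) K)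
          = C (u j) * X (idx j) := by rw [C_mul_X_eq_monomial]
      have heq : v j (idx j) - X (idx j) = (-(u j)⁻¹) • f j := by
        rw [hf_eq j, smul_add, hXm, MvPolynomial.smul_eq_C_mul, ← mul_assoc, ← C_mul]
        rw [show -(u j)⁻¹ * u j = -1 by rw [neg_mul, inv_mul_cancel₀ (hu j)]]
        rw [hv_def]
        simp only [Function.update_self]
        rw [MvPolynomial.smul_eq_C_mul]
        ring_nf
        simp [map_neg]
        ring
      show v j (idx j) - X (idx j) ∈ I
      rw [heq, MvPolynomial.smul_eq_C_mul]
      exact Ideal.mul_mem_left _ _ (hfj j)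
    · have : v j k - X k = 0 := by
        rw [hv_def]; simp [Function.update_of_ne hk]
      show v j k - X k ∈ I
      rw [this]; exact zero_mem _
  set Φ : ℕ → (MvPolynomial (Fin N) K →ₐ[K] MvPolynomial (Fin N) K) := auxPhi φ with hΦ_def
  have hΦsucc : ∀ k (h : k < n), Φ (k + 1) = (φ ⟨k, h⟩).comp (Φ k) := by
    intro k h; rw [hΦ_def]; rw [auxPhi]; rw [dif_pos h]
  have hΦsucc' : ∀ k, ¬ k < n → Φ (k + 1) = Φ k := by
    intro k h; rw [hΦ_def]; rw [auxPhi]; rw [dif_neg h]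
  have hΦI : ∀ k g, g - Φ k g ∈ I := by
    intro k
    induction k with
    | zero => intro g; rw [hΦ_def]; rw [auxPhi]; simpa using zero_mem I
    | succ k ih =>
      intro g
      by_cases h : k < n
      · rw [hΦsucc k h, AlgHom.comp_apply]
        have h1 : Φ k g - φ ⟨k, h⟩ (Φ k g) ∈ I := by
          have hmem := aux_aeval_sub_mem (v ⟨k, h⟩) (Φ k g)
          have hsp : Ideal.span (Set.range fun kk => v ⟨k, h⟩ kk - X kk) ≤ I :=
            Ideal.span_le.mpr (hvI ⟨k, h⟩)
          have : φ ⟨k, h⟩ (Φ k g) - Φ k g ∈ I := hsp hmem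
          have := neg_mem this
          rwa [neg_sub] at this
        have heq : g - (φ ⟨k, h⟩) (Φ k g)
            = (g - Φ k g) + (Φ k g - φ ⟨k, h⟩ (Φ k g)) := by ring
        rw [heq]
        exact add_mem (ih g) h1
      · rw [hΦsucc' k h]; exact ih g
  have hΦf : ∀ (j : Fin n) (k : ℕ), Φ k (f j) = if (j : ℕ) < k then 0 else f j := by
    intro j k
    induction k with
    | zero => rw [hΦ_def, auxPhi, if_neg (Nat.not_lt_zero _)]; rfl
    | succ k ih =>
      by_cases h : k < n
      · rw [hΦsucc k h, AlgHom.comp_apply, ih]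
        rcases lt_trichotomy (j : ℕ) k with hj | hj | hj
        · rw [if_pos hj, map_zero, if_pos (hj.trans (Nat.lt_succ_self k))]
        · have hjk : j = (⟨k, h⟩ : Fin n) := Fin.ext hj
          rw [if_neg (by omega), hjk, hφf, if_pos (by omega)]
        · have hfix : φ ⟨k, h⟩ (f j) = f j := by
            rw [hφ_def, hv_def]
            exact aux_aeval_fix _ _ _ (hnot ⟨k, h⟩ j hj)
          rw [if_neg (by omega), hfix, if_neg (by omega)]
      · rw [hΦsucc' k h, ih]
        have hjn : (j : ℕ) < n := j.2
        rw [if_pos (by omega), if_pos (by omega)]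
  have hker : ∀ g ∈ I, Φ n g = 0 := by
    intro g hg
    rw [hI] at hg
    have hsp : Ideal.span (Set.range f) ≤ RingHom.ker (Φ n : MvPolynomial (Fin N) K →+* MvPolynomial (Fin N) K) := by
      rw [Ideal.span_le]
      rintro _ ⟨j, rfl⟩
      rw [SetLike.mem_coe, RingHom.mem_ker]
      have := hΦf j n
      rwa [if_pos j.2] at this
    exact RingHom.mem_ker.mp (hsp hg)
  have hstep : ∀ (j : Fin n) (m : Fin N →₀ ℕ), (∀ j', m (idx j') = 0) →
      ∀ p : MvPolynomial (Fin N) K, (∀ ν ∈ p.support, le ν m) →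
      (∀ ν ∈ (φ j p).support, le ν m) ∧ coeff m (φ j p) = coeff m p := by
    intro j m hm0 p hp
    set c := coeff m p with hc_def
    set p' := p - monomial m c with hp'_def
    have hsupp' : ∀ ν ∈ p'.support, le ν m ∧ ν ≠ m := by
      intro ν hν
      have hc := MvPolynomial.mem_support_iff.mp hν
      have hne : ν ≠ m := by
        rintro rfl
        apply hc
        rw [hp'_def, MvPolynomial.coeff_sub, coeff_monomial, if_pos rfl, hc_def, sub_self]
      have hco : coeff ν p' = coeff ν p := by
        rw [hp'_def, MvPolynomial.coeff_sub, coeff_monomial, if_neg (Ne.symm hne), sub_zero]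
      rw [hco] at hc
      exact ⟨hp ν (MvPolynomial.mem_support_iff.mpr hc), hne⟩
    have hfix : φ j (monomial m c) = monomial m c := by
      rw [hφ_def, hv_def]
      refine aux_aeval_fix _ _ _ (fun d hd => ?_)
      have hdm : d = m := by
        have := MvPolynomial.mem_support_iff.mp hd
        rw [coeff_monomial] at this
        by_contra h'
        rw [if_neg (by simpa [eq_comm] using h')] at this
        exact this rfl
      rw [hdm]; exact hm0 j
    have hdecomp : φ j p = φ j p' + monomial m c := by
      conv_lhs => rw [show p = p' + monomial m c by rw [hp'_def, sub_add_cancel]]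
      rw [map_add, hfix]
    have hb : ∀ ν ∈ (φ j p').support, le ν m ∧ ν ≠ m := by
      intro ν hν
      have hν' : ν ∈ (aeval (v j) p').support := by rwa [hφ_def] at hν
      obtain ⟨μ, hμ, hle'⟩ := aux_aeval_support ⟨hlin, hzero, hadd⟩ (v j) (hv j) p' ν hν'
      obtain ⟨hμm, hμne⟩ := hsupp' μ hμ
      refine ⟨trans_of le hle' hμm, ?_⟩
      rintro rfl
      exact hμne (antisymm_of le hμm hle')
    constructor
    · intro ν hν
      rw [hdecomp] at hν
      rcases Finset.mem_union.mp (MvPolynomial.support_add hν) with h | h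
      · exact (hb ν h).1
      · have hνm : ν = m := by
          have := MvPolynomial.mem_support_iff.mp h
          rw [coeff_monomial] at this
          by_contra h'
          rw [if_neg (by simpa [eq_comm] using h')] at this
          exact this rfl
        rw [hνm]; exact refl_of le m
    · rw [hdecomp, MvPolynomial.coeff_add]
      have hz : coeff m (φ j p') = 0 := by
        by_contra h
        exact (hb m (MvPolynomial.mem_support_iff.mpr h)).2 rfl
      rw [hz, zero_add, coeff_monomial, if_pos rfl]
  have hkey : ∀ g ∈ I, ∀ m, IsLeadMono le g m → ∃ j, m (idx j) ≠ 0 := by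
    intro g hg m hm
    by_contra hcon
    push_neg at hcon
    have hiter : ∀ k, (∀ ν ∈ (Φ k g).support, le ν m) ∧ coeff m (Φ k g) = coeff m g := by
      intro k
      induction k with
      | zero =>
        constructor
        · intro ν hν; rw [hΦ_def, auxPhi] at hν; exact hm.2 ν hν
        · rw [hΦ_def, auxPhi]; rfl
      | succ k ih =>
        by_cases h : k < n
        · rw [hΦsucc k h, AlgHom.comp_apply]
          obtain ⟨h1, h2⟩ := hstep ⟨k, h⟩ m hcon (Φ k g) ih.1
          exact ⟨h1, h2.trans ih.2⟩
        · rw [hΦsucc' k h]; exact ih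
    have h0 := (hiter n).2
    rw [hker g hg] at h0
    have hms := MvPolynomial.mem_support_iff.mp hm.1
    apply hms
    rw [← h0, MvPolynomial.coeff_zero]
  have hinit_le : initialIdeal le I ≤
      Ideal.span (Set.range fun j => (X (idx j) : MvPolynomial (Fin N) K)) := by
    rw [initialIdeal, Ideal.span_le]
    rintro _ ⟨g, hg, m, hm, rfl⟩
    obtain ⟨j, hj⟩ := hkey g hg m hm
    have h1 : (1 : ℕ) ≤ m (idx j) := Nat.one_le_iff_ne_zero.mpr hj
    have hle1 : Finsupp.single (idx j) 1 ≤ m := Finsupp.single_le_iff.mpr h1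
    have hmeq : (monomial m (coeff m g) : MvPolynomial (Fin N) K)
        = monomial (m - Finsupp.single (idx j) 1) (coeff m g) * X (idx j) := by
      rw [show (X (idx j) : MvPolynomial (Fin N) K)
          = monomial (Finsupp.single (idx j) 1) 1 from rfl]
      rw [monomial_mul, mul_one, tsub_add_cancel_of_le hle1]
    rw [SetLike.mem_coe, hmeq]
    exact Ideal.mul_mem_left _ _ (Ideal.subset_span ⟨j, rfl⟩)
  have hJ1_le : Ideal.span (Set.range fun j =>
      (monomial (Finsupp.single (idx j) 1) (u j) : MvPolynomial (Fin N) K)) ≤ initialIdeal le I := by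
    rw [Ideal.span_le]
    rintro _ ⟨j, rfl⟩
    refine Ideal.subset_span ⟨f j, hfj j, Finsupp.single (idx j) 1, (hlead j).1, ?_⟩
    rw [(hlead j).2]
  have hJ2_le : Ideal.span (Set.range fun j => (X (idx j) : MvPolynomial (Fin N) K)) ≤
      Ideal.span (Set.range fun j =>
        (monomial (Finsupp.single (idx j) 1) (u j) : MvPolynomial (Fin N) K)) := by
    rw [Ideal.span_le]
    rintro _ ⟨j, rfl⟩
    have hXeq : (X (idx j) : MvPolynomial (Fin N) K)
        = C (u j)⁻¹ * monomial (Finsupp.single (idx j) 1) (u j) := by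
      rw [C_mul_monomial, inv_mul_cancel₀ (hu j)]
      rfl
    show (X (idx j) : MvPolynomial (Fin N) K) ∈ _
    rw [hXeq]
    exact Ideal.mul_mem_left _ _ (Ideal.subset_span ⟨j, rfl⟩)
  refine ⟨le_antisymm (hinit_le.trans hJ2_le) hJ1_le,
    le_antisymm hinit_le (hJ2_le.trans hJ1_le)⟩
end

section
/- If the leading terms of two polynomials f and g in a polynomial ring over a field with respect to a monomial order are relatively prime monomials (up to nonzero scalar), then the S-polynomial S(f,g) reduces to zero modulo {f,g}, and hence {f,g} is a Gröbner basis for the ideal it generates. -/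
open MvPolynomial

section helpers
variable {N : ℕ} {le : (Fin N →₀ ℕ) → (Fin N →₀ ℕ) → Prop}

lemma mo_refl (hle : IsMonomialOrder le) (x) : le x x :=
  hle.1.toIsPartialOrder.toIsPreorder.toRefl.refl x

lemma mo_trans (hle : IsMonomialOrder le) {x y z} (h1 : le x y) (h2 : le y z) : le x z :=
  hle.1.toIsPartialOrder.toIsPreorder.toIsTrans.trans x y z h1 h2

lemma mo_anti (hle : IsMonomialOrder le) {x y} (h1 : le x y) (h2 : le y x) : x = y :=
  hle.1.toIsPartialOrder.toAntisymm.antisymm x y h1 h2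

lemma mo_total (hle : IsMonomialOrder le) (x y) : le x y ∨ le y x :=
  hle.1.toTotal.total x y

lemma mo_add2 (hle : IsMonomialOrder le) {x y u v} (h1 : le x u) (h2 : le y v) :
    le (x + y) (u + v) := by
  have a1 := hle.2.2 x u y h1
  have a2 := hle.2.2 y v u h2
  rw [add_comm y u, add_comm v u] at a2
  exact mo_trans hle a1 a2

lemma mo_pointwise (hle : IsMonomialOrder le) {x y : Fin N →₀ ℕ} (h : ∀ v, x v ≤ y v) :
    le x y := by
  have hxy : x ≤ y := h
  have h0 := hle.2.1 (y - x)
  have h2 := hle.2.2 0 (y - x) x h0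
  rwa [zero_add, tsub_add_cancel_of_le hxy] at h2

lemma mo_cancel (hle : IsMonomialOrder le) {p q u v : Fin N →₀ ℕ}
    (hp : le p u) (hq : le q v) (heq : p + q = u + v) : p = u ∧ q = v := by
  have h1 : le (p + q) (u + q) := hle.2.2 _ _ _ hp
  have h2 : le (u + q) (u + v) := by
    have := hle.2.2 q v u hq
    rwa [add_comm q u, add_comm v u] at this
  rw [heq] at h1
  have h3 : u + q = u + v := mo_anti hle h2 h1
  have hq' : q = v := by
    have := congrArg (· - u) h3
    simpa [add_tsub_cancel_left] using add_left_cancel h3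
  subst hq'
  exact ⟨add_right_cancel heq, rfl⟩

lemma mo_max (hle : IsMonomialOrder le) {s : Finset (Fin N →₀ ℕ)} (hs : s.Nonempty) :
    ∃ M ∈ s, ∀ x ∈ s, le x M := by
  classical
  induction s using Finset.induction_on with
  | empty => exact absurd hs (by simp)
  | @insert c s' hcs ih =>
    rcases s'.eq_empty_or_nonempty with rfl | hs'
    · exact ⟨c, by simp, by simp [mo_refl hle]⟩
    · obtain ⟨M, hM, hmax⟩ := ih hs'
      rcases mo_total hle c M with h | h
      · exact ⟨M, Finset.mem_insert_of_mem hM, by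
          intro x hx'
          rcases Finset.mem_insert.mp hx' with rfl | hx'
          · exact h
          · exact hmax x hx'⟩
      · exact ⟨c, Finset.mem_insert_self _ _, by
          intro x hx'
          rcases Finset.mem_insert.mp hx' with rfl | hx'
          · exact mo_refl hle x
          · exact mo_trans hle (hmax x hx') h⟩

lemma mo_wf (hle : IsMonomialOrder le) :
    WellFounded (fun x y : Fin N →₀ ℕ => le x y ∧ x ≠ y) := by
  have hpwo : (Set.univ : Set (Fin N →₀ ℕ)).PartiallyWellOrderedOn le := by
    rw [Set.partiallyWellOrderedOn_iff_exists_lt]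
    intro f hf
    obtain ⟨m, n, hmn, hle'⟩ :=
      (Set.isPWO_of_wellQuasiOrderedLE (Set.univ : Set (Fin N →₀ ℕ))).exists_lt hf
    exact ⟨m, n, hmn, mo_pointwise hle hle'⟩
  haveI : IsPreorder (Fin N →₀ ℕ) le :=
    { refl := mo_refl hle, trans := fun _ _ _ => mo_trans hle }
  have := hpwo.wellFoundedOn
  rw [Set.wellFoundedOn_univ] at this
  refine Subrelation.wf ?_ this
  rintro x y ⟨h1, h2⟩
  exact ⟨h1, fun h3 => h2 (mo_anti hle h1 h3)⟩
end helpers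


section helpers2
variable {K : Type*} [Field K] {N : ℕ} {le : (Fin N →₀ ℕ) → (Fin N →₀ ℕ) → Prop}

lemma lead_unique (hle : IsMonomialOrder le) {h : MvPolynomial (Fin N) K} {m m'}
    (h1 : IsLeadMono le h m) (h2 : IsLeadMono le h m') : m = m' :=
  mo_anti hle (h2.2 m h1.1) (h1.2 m' h2.1)

lemma exists_lead (hle : IsMonomialOrder le) {h : MvPolynomial (Fin N) K} (h0 : h ≠ 0) :
    ∃ m, IsLeadMono le h m :=
  let ⟨M, hM, hmax⟩ := mo_max hle (support_nonempty.mpr h0)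
  ⟨M, hM, hmax⟩

lemma coeff_mul_of_le (hle : IsMonomialOrder le) {p q : MvPolynomial (Fin N) K}
    {u v : Fin N →₀ ℕ}
    (hp : ∀ x ∈ p.support, le x u) (hq : ∀ y ∈ q.support, le y v) :
    coeff (u + v) (p * q) = coeff u p * coeff v q := by
  classical
  rw [coeff_mul]
  rw [Finset.sum_eq_single_of_mem (u, v)]
  · rw [Finset.HasAntidiagonal.mem_antidiagonal]
  · rintro ⟨x, y⟩ hxy hne
    rw [Finset.HasAntidiagonal.mem_antidiagonal] at hxy
    by_cases hx : x ∈ p.support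
    · by_cases hy : y ∈ q.support
      · obtain ⟨h1, h2⟩ := mo_cancel hle (hp x hx) (hq y hy) hxy
        exact absurd (Prod.ext h1 h2) hne
      · rw [MvPolynomial.notMem_support_iff.mp hy, mul_zero]
    · rw [MvPolynomial.notMem_support_iff.mp hx, zero_mul]

lemma support_mul_le (hle : IsMonomialOrder le) {p q : MvPolynomial (Fin N) K}
    {u v : Fin N →₀ ℕ}
    (hp : ∀ x ∈ p.support, le x u) (hq : ∀ y ∈ q.support, le y v) :
    ∀ m ∈ (p * q).support, le m (u + v) := by
  intro m hm
  rw [mem_support_iff, coeff_mul] at hm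
  obtain ⟨⟨x, y⟩, hxy, hne⟩ := Finset.exists_ne_zero_of_sum_ne_zero hm
  rw [Finset.HasAntidiagonal.mem_antidiagonal] at hxy
  have hx : x ∈ p.support := mem_support_iff.mpr (left_ne_zero_of_mul hne)
  have hy : y ∈ q.support := mem_support_iff.mpr (right_ne_zero_of_mul hne)
  rw [← hxy]
  exact mo_add2 hle (hp x hx) (hq y hy)

lemma lead_mul (hle : IsMonomialOrder le) {p q : MvPolynomial (Fin N) K} {u v : Fin N →₀ ℕ}
    (hp : IsLeadMono le p u) (hq : IsLeadMono le q v) : IsLeadMono le (p * q) (u + v) := by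
  refine ⟨mem_support_iff.mpr ?_, support_mul_le hle hp.2 hq.2⟩
  rw [coeff_mul_of_le hle hp.2 hq.2]
  exact mul_ne_zero (mem_support_iff.mp hp.1) (mem_support_iff.mp hq.1)

lemma lead_monomial {u : Fin N →₀ ℕ} {c : K} (hc : c ≠ 0) (hle : IsMonomialOrder le) :
    IsLeadMono le (monomial u c : MvPolynomial (Fin N) K) u := by
  classical
  constructor
  · rw [mem_support_iff, coeff_monomial, if_pos rfl]; exact hc
  · intro m' hm'
    rw [mem_support_iff, coeff_monomial] at hm'
    by_cases h : u = m'
    · subst h; exact mo_refl hle u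
    · simp [h] at hm'

lemma lead_C_mul (hle : IsMonomialOrder le) {p : MvPolynomial (Fin N) K} {w : Fin N →₀ ℕ}
    {c : K} (hc : c ≠ 0) (hp : IsLeadMono le p w) : IsLeadMono le (C c * p) w := by
  constructor
  · rw [mem_support_iff, coeff_C_mul]
    exact mul_ne_zero hc (mem_support_iff.mp hp.1)
  · intro m' hm'
    rw [mem_support_iff, coeff_C_mul] at hm'
    exact hp.2 m' (mem_support_iff.mpr fun h => hm' (by rw [h, mul_zero]))

lemma tail_support (hle : IsMonomialOrder le) {f : MvPolynomial (Fin N) K} {a : Fin N →₀ ℕ}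
    (hfa : IsLeadMono le f a) :
    ∀ x ∈ (f - monomial a (coeff a f)).support, le x a ∧ x ≠ a := by
  classical
  intro x hx
  rw [mem_support_iff, coeff_sub, coeff_monomial] at hx
  by_cases h : x = a
  · subst h; simp at hx
  · rw [if_neg (fun hh => h hh.symm), sub_zero] at hx
    exact ⟨hfa.2 x (mem_support_iff.mpr hx), h⟩

lemma cop_le {a b : Fin N →₀ ℕ} (hcop : ∀ v, a v = 0 ∨ b v = 0)
    {p q : Fin N →₀ ℕ} (h : p + a = q + b) : ∀ v, b v ≤ p v := by
  intro v
  have hv : p v + a v = q v + b v := by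
    have := congrArg (fun z : Fin N →₀ ℕ => z v) h
    simpa using this
  rcases hcop v with h1 | h1
  · omega
  · omega

end helpers2


section key
variable {K : Type*} [Field K] {N : ℕ} {le : (Fin N →₀ ℕ) → (Fin N →₀ ℕ) → Prop}

lemma key_lemma (hle : IsMonomialOrder le) {f g : MvPolynomial (Fin N) K}
    (hf : f ≠ 0) (hg : g ≠ 0) {a b : Fin N →₀ ℕ}
    (hfa : IsLeadMono le f a) (hgb : IsLeadMono le g b)
    (hcop : ∀ v, a v = 0 ∨ b v = 0)
    {h : MvPolynomial (Fin N) K} {m : Fin N →₀ ℕ} (hm : IsLeadMono le h m) :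
    ∀ P Q : MvPolynomial (Fin N) K, h = P * f + Q * g →
      (∀ v, a v ≤ m v) ∨ (∀ v, b v ≤ m v) := by
  have hsupp : ∀ P Q : MvPolynomial (Fin N) K, h = P * f + Q * g →
      m ∈ (P * f).support ∪ (Q * g).support := by
    intro P Q hPQ
    apply Finset.mem_of_subset MvPolynomial.support_add
    rw [← hPQ]; exact hm.1
  suffices H : ∀ M : Fin N →₀ ℕ, ∀ P Q : MvPolynomial (Fin N) K, h = P * f + Q * g →
      M ∈ (P * f).support ∪ (Q * g).support →
      (∀ x ∈ (P * f).support ∪ (Q * g).support, le x M) →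
      (∀ v, a v ≤ m v) ∨ (∀ v, b v ≤ m v) by
    intro P Q hPQ
    obtain ⟨M, hM, hmax⟩ := mo_max hle ⟨m, hsupp P Q hPQ⟩
    exact H M P Q hPQ hM hmax
  intro M
  induction M using WellFounded.induction (mo_wf hle) with
  | _ M IH =>
  intro P Q hPQ hMU hMmax
  have hcsum : coeff M (P * f) + coeff M (Q * g) = coeff M h := by
    rw [hPQ, coeff_add]
  by_cases hMh : M ∈ h.support
  · -- M is the lead monomial of h
    have hMm : M = m := mo_anti hle (hm.2 M hMh) (hMmax m (hsupp P Q hPQ))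
    rcases Finset.mem_union.mp hMU with hMP | hMQ
    · have hP0 : P ≠ 0 := by
        rintro rfl; rw [zero_mul, MvPolynomial.support_zero] at hMP; exact absurd hMP (by simp)
      obtain ⟨p, hp⟩ := exists_lead hle hP0
      have h1 : IsLeadMono le (P * f) M :=
        ⟨hMP, fun x hx => hMmax x (Finset.mem_union_left _ hx)⟩
      have h2 : M = p + a := lead_unique hle h1 (lead_mul hle hp hfa)
      left; intro v
      rw [← hMm, h2, Finsupp.add_apply]
      exact Nat.le_add_left _ _
    · have hQ0 : Q ≠ 0 := by
        rintro rfl; rw [zero_mul, MvPolynomial.support_zero] at hMQ; exact absurd hMQ (by simp)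
      obtain ⟨q, hq⟩ := exists_lead hle hQ0
      have h1 : IsLeadMono le (Q * g) M :=
        ⟨hMQ, fun x hx => hMmax x (Finset.mem_union_right _ hx)⟩
      have h2 : M = q + b := lead_unique hle h1 (lead_mul hle hq hgb)
      right; intro v
      rw [← hMm, h2, Finsupp.add_apply]
      exact Nat.le_add_left _ _
  · -- cancellation at the top: rewrite the representation
    have hch : coeff M h = 0 := MvPolynomial.notMem_support_iff.mp hMh
    have hPfQg : coeff M (P * f) ≠ 0 ∧ coeff M (Q * g) ≠ 0 := by
      rcases Finset.mem_union.mp hMU with hMP | hMQ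
      · have h1 : coeff M (P * f) ≠ 0 := MvPolynomial.mem_support_iff.mp hMP
        refine ⟨h1, fun h2 => h1 ?_⟩
        rw [hch, h2, add_zero] at hcsum; exact hcsum
      · have h1 : coeff M (Q * g) ≠ 0 := MvPolynomial.mem_support_iff.mp hMQ
        refine ⟨fun h2 => h1 ?_, h1⟩
        rw [hch, h2, zero_add] at hcsum; exact hcsum
    have hMP : M ∈ (P * f).support := MvPolynomial.mem_support_iff.mpr hPfQg.1
    have hMQ : M ∈ (Q * g).support := MvPolynomial.mem_support_iff.mpr hPfQg.2
    have hP0 : P ≠ 0 := by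
      rintro rfl; rw [zero_mul, MvPolynomial.support_zero] at hMP; exact absurd hMP (by simp)
    have hQ0 : Q ≠ 0 := by
      rintro rfl; rw [zero_mul, MvPolynomial.support_zero] at hMQ; exact absurd hMQ (by simp)
    obtain ⟨p, hp⟩ := exists_lead hle hP0
    obtain ⟨q, hq⟩ := exists_lead hle hQ0
    have hMpa : M = p + a := lead_unique hle
      ⟨hMP, fun x hx => hMmax x (Finset.mem_union_left _ hx)⟩ (lead_mul hle hp hfa)
    have hMqb : M = q + b := lead_unique hle
      ⟨hMQ, fun x hx => hMmax x (Finset.mem_union_right _ hx)⟩ (lead_mul hle hq hgb)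
    have hble : ∀ v, b v ≤ p v := cop_le hcop (hMpa ▸ hMqb ▸ rfl : p + a = q + b)
    set u : Fin N →₀ ℕ := p - b with hu
    have hub : u + b = p := by
      ext v; simp only [Finsupp.add_apply, hu, Finsupp.tsub_apply]
      have := hble v; omega
    have hca : coeff a f ≠ 0 := MvPolynomial.mem_support_iff.mp hfa.1
    have hcb : coeff b g ≠ 0 := MvPolynomial.mem_support_iff.mp hgb.1
    have hcp : coeff p P ≠ 0 := MvPolynomial.mem_support_iff.mp hp.1
    set c : K := coeff p P * (coeff b g)⁻¹ with hc
    have hc0 : c ≠ 0 := mul_ne_zero hcp (inv_ne_zero hcb)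
    set P' : MvPolynomial (Fin N) K := P - monomial u c * g with hP'
    set Q' : MvPolynomial (Fin N) K := Q + monomial u c * f with hQ'
    have hPQ' : h = P' * f + Q' * g := by rw [hPQ, hP', hQ']; ring
    -- coefficient of the correction term at M
    have hMuba : M = u + (b + a) := by rw [← add_assoc, hub, hMpa]
    have hMuab : M = u + (a + b) := by rw [add_comm a b, ← hMuba]
    have hmono : ∀ x ∈ (monomial u c : MvPolynomial (Fin N) K).support, le x u :=
      (lead_monomial hc0 hle).2
    have hcorr1 : coeff M ((monomial u c : MvPolynomial (Fin N) K) * (g * f)) =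
        coeff p P * coeff a f := by
      rw [hMuba, coeff_mul_of_le hle hmono (support_mul_le hle hgb.2 hfa.2),
        coeff_mul_of_le hle hgb.2 hfa.2]
      rw [MvPolynomial.coeff_monomial, if_pos rfl, hc]
      field_simp
    have hcorr2 : coeff M ((monomial u c : MvPolynomial (Fin N) K) * (f * g)) =
        coeff p P * coeff a f := by
      rw [hMuab, coeff_mul_of_le hle hmono (support_mul_le hle hfa.2 hgb.2),
        coeff_mul_of_le hle hfa.2 hgb.2]
      rw [MvPolynomial.coeff_monomial, if_pos rfl, hc]
      field_simp
    have hPfM : coeff M (P * f) = coeff p P * coeff a f := by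
      rw [hMpa, coeff_mul_of_le hle hp.2 hfa.2]
    -- new coefficients at M vanish
    have hP'fM : coeff M (P' * f) = 0 := by
      have : P' * f = P * f - monomial u c * (g * f) := by rw [hP']; ring
      rw [this, coeff_sub, hcorr1, hPfM, sub_self]
    have hQ'gM : coeff M (Q' * g) = 0 := by
      have : Q' * g = Q * g + monomial u c * (f * g) := by rw [hQ']; ring
      rw [this, coeff_add, hcorr2]
      have h0 : coeff M (P * f) + coeff M (Q * g) = 0 := by rw [hcsum, hch]
      have : coeff M (Q * g) = -(coeff p P * coeff a f) := by
        rw [← hPfM]; linear_combination h0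
      rw [this]; ring
    -- every monomial of the new representation is ≤ M and ≠ M
    have hbound : ∀ x ∈ (P' * f).support ∪ (Q' * g).support, le x M ∧ x ≠ M := by
      intro x hx
      have hxM : le x M := by
        rcases Finset.mem_union.mp hx with hx1 | hx1
        · have : P' * f = P * f - monomial u c * (g * f) := by rw [hP']; ring
          rw [this] at hx1
          have hcx := MvPolynomial.mem_support_iff.mp hx1
          rw [coeff_sub] at hcx
          by_cases h1 : coeff x (P * f) = 0
          · have h2 : coeff x ((monomial u c : MvPolynomial (Fin N) K) * (g * f)) ≠ 0 := by
              intro h2; rw [h1, h2, sub_zero] at hcx; exact hcx rfl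
            have := support_mul_le hle hmono (support_mul_le hle hgb.2 hfa.2) x
              (MvPolynomial.mem_support_iff.mpr h2)
            rwa [← hMuba] at this
          · exact hMmax x (Finset.mem_union_left _ (MvPolynomial.mem_support_iff.mpr h1))
        · have : Q' * g = Q * g + monomial u c * (f * g) := by rw [hQ']; ring
          rw [this] at hx1
          have hcx := MvPolynomial.mem_support_iff.mp hx1
          rw [coeff_add] at hcx
          by_cases h1 : coeff x (Q * g) = 0
          · have h2 : coeff x ((monomial u c : MvPolynomial (Fin N) K) * (f * g)) ≠ 0 := by
              intro h2; rw [h1, h2, add_zero] at hcx; exact hcx rfl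
            have := support_mul_le hle hmono (support_mul_le hle hfa.2 hgb.2) x
              (MvPolynomial.mem_support_iff.mpr h2)
            rwa [← hMuab] at this
          · exact hMmax x (Finset.mem_union_right _ (MvPolynomial.mem_support_iff.mpr h1))
      refine ⟨hxM, ?_⟩
      rintro rfl
      rcases Finset.mem_union.mp hx with hx1 | hx1
      · exact MvPolynomial.mem_support_iff.mp hx1 hP'fM
      · exact MvPolynomial.mem_support_iff.mp hx1 hQ'gM
    obtain ⟨M', hM', hmax'⟩ := mo_max hle ⟨m, hsupp P' Q' hPQ'⟩
    exact IH M' ⟨(hbound M' hM').1, (hbound M' hM').2⟩ P' Q' hPQ' hM' hmax'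
end key


section part1
variable {K : Type*} [Field K] {N : ℕ} {le : (Fin N →₀ ℕ) → (Fin N →₀ ℕ) → Prop}

lemma spoly_rep (hle : IsMonomialOrder le) {f g : MvPolynomial (Fin N) K}
    {a b : Fin N →₀ ℕ}
    (hfa : IsLeadMono le f a) (hgb : IsLeadMono le g b)
    (hcop : ∀ v, a v = 0 ∨ b v = 0) :
    ∃ A B : MvPolynomial (Fin N) K,
      (monomial b (coeff a f)⁻¹) * f - (monomial a (coeff b g)⁻¹) * g = A * f + B * g ∧
      ∀ m ∈ (A * f).support ∪ (B * g).support,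
        ∃ ms, IsLeadMono le
          ((monomial b (coeff a f)⁻¹) * f - (monomial a (coeff b g)⁻¹) * g) ms ∧ le m ms := by
  have hca : coeff a f ≠ 0 := MvPolynomial.mem_support_iff.mp hfa.1
  have hcb : coeff b g ≠ 0 := MvPolynomial.mem_support_iff.mp hgb.1
  set k : K := (coeff a f)⁻¹ * (coeff b g)⁻¹ with hk
  have hk0 : k ≠ 0 := mul_ne_zero (inv_ne_zero hca) (inv_ne_zero hcb)
  set f1 : MvPolynomial (Fin N) K := f - monomial a (coeff a f) with hf1
  set g1 : MvPolynomial (Fin N) K := g - monomial b (coeff b g) with hg1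
  refine ⟨-(C k) * g1, C k * f1, ?_, ?_⟩
  · have e1 : (monomial b (coeff a f)⁻¹ : MvPolynomial (Fin N) K)
        = C k * monomial b (coeff b g) := by
      rw [C_mul_monomial]; congr 1
      rw [hk]; field_simp
    have e2 : (monomial a (coeff b g)⁻¹ : MvPolynomial (Fin N) K)
        = C k * monomial a (coeff a f) := by
      rw [C_mul_monomial]; congr 1
      rw [hk]; field_simp
    rw [e1, e2, hf1, hg1]; ring
  · intro m hm
    set S : MvPolynomial (Fin N) K :=
      (monomial b (coeff a f)⁻¹) * f - (monomial a (coeff b g)⁻¹) * g with hS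
    have hid : S = (-(C k) * g1) * f + (C k * f1) * g := by
      rw [hS]
      have e1 : (monomial b (coeff a f)⁻¹ : MvPolynomial (Fin N) K)
          = C k * monomial b (coeff b g) := by
        rw [C_mul_monomial]; congr 1
        rw [hk]; field_simp
      have e2 : (monomial a (coeff b g)⁻¹ : MvPolynomial (Fin N) K)
          = C k * monomial a (coeff a f) := by
        rw [C_mul_monomial]; congr 1
        rw [hk]; field_simp
      rw [e1, e2, hf1, hg1]; ring
    obtain ⟨M, hM, hmax⟩ := mo_max hle ⟨m, hm⟩
    refine ⟨M, ⟨?_, ?_⟩, hmax m hm⟩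
    · -- M ∈ S.support
      rw [MvPolynomial.mem_support_iff, hid, coeff_add]
      have hnotboth : ¬ (coeff M (-(C k) * g1 * f) ≠ 0 ∧ coeff M (C k * f1 * g) ≠ 0) := by
        rintro ⟨h1, h2⟩
        have hAne : -(C k) * g1 * f ≠ 0 := fun hh => h1 (by rw [hh, coeff_zero])
        have hBne : C k * f1 * g ≠ 0 := fun hh => h2 (by rw [hh, coeff_zero])
        have hg1ne : g1 ≠ 0 := by
          intro hgg; rw [hgg, mul_zero, zero_mul] at hAne; exact hAne rfl
        have hf1ne : f1 ≠ 0 := by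
          intro hff; rw [hff, mul_zero, zero_mul] at hBne; exact hBne rfl
        obtain ⟨w, hw⟩ := exists_lead hle hg1ne
        obtain ⟨w', hw'⟩ := exists_lead hle hf1ne
        have hlA : IsLeadMono le (-(C k) * g1 * f) (w + a) := by
          have : -(C k) * g1 = C (-k) * g1 := by rw [map_neg]
          rw [this]
          exact lead_mul hle (lead_C_mul hle (neg_ne_zero.mpr hk0) hw) hfa
        have hlB : IsLeadMono le (C k * f1 * g) (w' + b) :=
          lead_mul hle (lead_C_mul hle hk0 hw') hgb
        have hMA : M = w + a := lead_unique hle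
          ⟨MvPolynomial.mem_support_iff.mpr h1,
            fun x hx => hmax x (Finset.mem_union_left _ hx)⟩ hlA
        have hMB : M = w' + b := lead_unique hle
          ⟨MvPolynomial.mem_support_iff.mpr h2,
            fun x hx => hmax x (Finset.mem_union_right _ hx)⟩ hlB
        have haw' : ∀ v, a v ≤ w' v := by
          have hcop' : ∀ v, b v = 0 ∨ a v = 0 := fun v => (hcop v).symm
          exact cop_le hcop' (hMB ▸ hMA ▸ rfl : w' + b = w + a)
        have h3 : le a w' := mo_pointwise hle haw'
        have h4 := tail_support hle hfa w' hw'.1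
        exact h4.2 (mo_anti hle (h4.1) h3)
      rcases Finset.mem_union.mp hM with h1 | h1
      · have hc1 : coeff M (-(C k) * g1 * f) ≠ 0 := MvPolynomial.mem_support_iff.mp h1
        have hc2 : coeff M (C k * f1 * g) = 0 := by
          by_contra hc2
          exact hnotboth ⟨hc1, hc2⟩
        rw [hc2, add_zero]; exact hc1
      · have hc1 : coeff M (C k * f1 * g) ≠ 0 := MvPolynomial.mem_support_iff.mp h1
        have hc2 : coeff M (-(C k) * g1 * f) = 0 := by
          by_contra hc2
          exact hnotboth ⟨hc2, hc1⟩
        rw [hc2, zero_add]; exact hc1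
    · -- maximality over S.support
      intro x hx
      apply hmax
      have : S.support ⊆ (-(C k) * g1 * f).support ∪ (C k * f1 * g).support := by
        rw [hid]; exact MvPolynomial.support_add
      exact this hx
end part1


/-- If the leading monomials `a`, `b` of `f`, `g` are relatively prime,
then the S-polynomial `S(f,g)` reduces to zero modulo `{f,g}` (it admits a standard
representation `S = A·f + B·g` where every monomial of `A·f` and of `B·g` is
`≤` the leading monomial of `S`), and `{f,g}` is a Gröbner basis for the ideal it
generates (its leading terms generate the initial ideal of `⟨f,g⟩`). -/
theorem stmt1 {K : Type*} [Field K] {N : ℕ}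
    (le : (Fin N →₀ ℕ) → (Fin N →₀ ℕ) → Prop)
    (hle : IsMonomialOrder le)
    (f g : MvPolynomial (Fin N) K) (hf : f ≠ 0) (hg : g ≠ 0)
    (a b : Fin N →₀ ℕ)
    (hfa : IsLeadMono le f a) (hgb : IsLeadMono le g b)
    (hcop : ∀ v, a v = 0 ∨ b v = 0) :
    (∃ A B : MvPolynomial (Fin N) K,
      (MvPolynomial.monomial ((a ⊔ b) - a) (MvPolynomial.coeff a f)⁻¹) * f -
        (MvPolynomial.monomial ((a ⊔ b) - b) (MvPolynomial.coeff b g)⁻¹) * g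
        = A * f + B * g ∧
      ∀ m ∈ (A * f).support ∪ (B * g).support,
        ∃ ms, IsLeadMono le
          ((MvPolynomial.monomial ((a ⊔ b) - a) (MvPolynomial.coeff a f)⁻¹) * f -
            (MvPolynomial.monomial ((a ⊔ b) - b) (MvPolynomial.coeff b g)⁻¹) * g) ms ∧
          le m ms) ∧
    initialIdeal le (Ideal.span {f, g}) =
      Ideal.span {MvPolynomial.monomial a (MvPolynomial.coeff a f),
        MvPolynomial.monomial b (MvPolynomial.coeff b g)} := by
  have hba : (a ⊔ b) - a = b := by
    ext v
    rw [Finsupp.tsub_apply, Finsupp.sup_apply]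
    rcases hcop v with h | h <;> simp [h] <;> omega
  have hab : (a ⊔ b) - b = a := by
    ext v
    rw [Finsupp.tsub_apply, Finsupp.sup_apply]
    rcases hcop v with h | h <;> simp [h] <;> omega
  rw [hba, hab]
  constructor
  · exact spoly_rep hle hfa hgb hcop
  · have hca : coeff a f ≠ 0 := MvPolynomial.mem_support_iff.mp hfa.1
    have hcb : coeff b g ≠ 0 := MvPolynomial.mem_support_iff.mp hgb.1
    apply le_antisymm
    · rw [initialIdeal]
      apply Ideal.span_le.mpr
      rintro t ⟨h, hhI, m, hm, rfl⟩
      obtain ⟨P, Q, hPQ⟩ := Ideal.mem_span_pair.mp hhI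
      rcases key_lemma hle hf hg hfa hgb hcop hm P Q hPQ.symm with hal | hbl
    -- a ≤ m pointwise
      · have hma : m - a + a = m := by
          ext v; rw [Finsupp.add_apply, Finsupp.tsub_apply]; have := hal v; omega
        have : (monomial m (coeff m h) : MvPolynomial (Fin N) K)
            = monomial (m - a) (coeff m h * (coeff a f)⁻¹) * monomial a (coeff a f) := by
          rw [monomial_mul, hma]
          congr 1
          field_simp
        rw [this]
        exact Ideal.mul_mem_left _ _ (Ideal.subset_span (Set.mem_insert _ _))
      · have hmb : m - b + b = m := by
          ext v; rw [Finsupp.add_apply, Finsupp.tsub_apply]; have := hbl v; omega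
        have : (monomial m (coeff m h) : MvPolynomial (Fin N) K)
            = monomial (m - b) (coeff m h * (coeff b g)⁻¹) * monomial b (coeff b g) := by
          rw [monomial_mul, hmb]
          congr 1
          field_simp
        rw [this]
        exact Ideal.mul_mem_left _ _ (Ideal.subset_span
          (Set.mem_insert_of_mem _ (Set.mem_singleton _)))
    · apply Ideal.span_le.mpr
      rintro t ht
      rcases Set.mem_insert_iff.mp ht with rfl | ht'
      · exact Ideal.subset_span ⟨f, Ideal.subset_span (Set.mem_insert _ _), a, hfa, rfl⟩
      · rcases Set.mem_singleton_iff.mp ht' with rfl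
        exact Ideal.subset_span ⟨g, Ideal.subset_span
          (Set.mem_insert_of_mem _ (Set.mem_singleton _)), b, hgb, rfl⟩
end

section
/- Let n ≥ 3 and let M' be the generic n×n matrix over the polynomial ring K[x_{i,j} : i+j ≤ n] with entries M'_{i,j} = x_{i,j} for i+j ≤ n, M'_{i,j} = 1 for i+j = n+1, and M'_{i,j} = 0 for i+j > n+1. For 2 ≤ s ≤ n and 1 ≤ p < n with s + p ≤ n, the (n−2)×(n−2) minor of M' obtained by deleting rows 1 and s and columns p and n has determinant zero. -/
open MvPolynomial

/-- The generic antidiagonal-unipotent `n × n` matrix `M'` (the matrix `w₀M` of the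
paper): indeterminate entries `x_{i,j}` strictly above the antidiagonal
(1-indexed `i + j ≤ n`, i.e. 0-indexed `i + j < n - 1`), `1`'s on the antidiagonal,
and `0`'s below it. -/
noncomputable def genM (K : Type*) [Field K] (n : ℕ) :
    Matrix (Fin n) (Fin n) (MvPolynomial (Fin n × Fin n) K) := fun i j =>
  if (i : ℕ) + (j : ℕ) < n - 1 then MvPolynomial.X (i, j)
  else if (i : ℕ) + (j : ℕ) = n - 1 then 1 else 0

lemma card_filter_le_val (m k : ℕ) :
    ((Finset.univ : Finset (Fin m)).filter fun a : Fin m => k ≤ a.val).card = m - k := by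
  have h : (((Finset.univ : Finset (Fin m)).filter fun a : Fin m => k ≤ a.val).map
      Fin.valEmbedding) = (Finset.Iio m).filter fun x => k ≤ x := by
    rw [← Fin.map_valEmbedding_univ, Finset.filter_map]
    rfl
  have h2 := congrArg Finset.card h
  rw [Finset.card_map] at h2
  rw [h2]
  have h3 : (Finset.Iio m).filter (fun x => k ≤ x) = Finset.Ico k m := by
    ext x; simp only [Finset.mem_filter, Finset.mem_Iio, Finset.mem_Ico]; exact and_comm
  rw [h3, Nat.card_Ico]

lemma card_filter_val_lt (m k : ℕ) :
    ((Finset.univ : Finset (Fin m)).filter fun a : Fin m => a.val < k).card = min k m := by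
  have h : (((Finset.univ : Finset (Fin m)).filter fun a : Fin m => a.val < k).map
      Fin.valEmbedding) = (Finset.Iio m).filter fun x => x < k := by
    rw [← Fin.map_valEmbedding_univ, Finset.filter_map]
    rfl
  have h2 := congrArg Finset.card h
  rw [Finset.card_map] at h2
  rw [h2]
  have h3 : (Finset.Iio m).filter (fun x => x < k) = Finset.Iio (min k m) := by
    ext x; simp [lt_min_iff, and_comm]
  rw [h3, Nat.card_Iio]

/-- For `2 ≤ s ≤ n` and `1 ≤ p < n` with `s + p ≤ n` (1-indexed),
the `(n-2) × (n-2)` minor of `M'` obtained by deleting rows `1` and `s` and columns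
`p` and `n` has determinant zero. -/
theorem stmt4 {K : Type*} [Field K] {n : ℕ} (hn : 3 ≤ n)
    (s p : ℕ) (hs2 : 2 ≤ s) (hsn : s ≤ n) (hp1 : 1 ≤ p) (hpn : p < n)
    (hsp : s + p ≤ n) :
    Matrix.det ((genM K n).submatrix
      (fun a : Fin (n - 2) =>
        (⟨if a.val + 1 < s - 1 then a.val + 1 else a.val + 2,
          by have := a.isLt; split <;> omega⟩ : Fin n))
      (fun a : Fin (n - 2) =>
        (⟨if a.val < p - 1 then a.val else a.val + 1,
          by have := a.isLt; split <;> omega⟩ : Fin n))) = 0 := by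
  rw [Matrix.det_apply]
  apply Finset.sum_eq_zero
  intro σ _
  have hex : ∃ i : Fin (n - 2), n - s - 1 ≤ i.val ∧ s - 2 ≤ (σ i).val := by
    by_contra hcon
    push_neg at hcon
    have hmap : ∀ i ∈ (Finset.univ.filter fun a : Fin (n - 2) => n - s - 1 ≤ a.val),
        σ i ∈ (Finset.univ.filter fun a : Fin (n - 2) => a.val < s - 2) := by
      intro i hi
      simp only [Finset.mem_filter, Finset.mem_univ, true_and] at hi ⊢
      exact hcon i hi
    have hcard := Finset.card_le_card_of_injOn σ hmap (σ.injective.injOn)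
    rw [card_filter_le_val, card_filter_val_lt] at hcard
    omega
  obtain ⟨i, hi1, hi2⟩ := hex
  suffices hprod : (∏ j, (genM K n).submatrix
      (fun a : Fin (n - 2) =>
        (⟨if a.val + 1 < s - 1 then a.val + 1 else a.val + 2,
          by have := a.isLt; split <;> omega⟩ : Fin n))
      (fun a : Fin (n - 2) =>
        (⟨if a.val < p - 1 then a.val else a.val + 1,
          by have := a.isLt; split <;> omega⟩ : Fin n)) (σ j) j) = 0 by
    rw [hprod, smul_zero]
  apply Finset.prod_eq_zero (Finset.mem_univ i)
  have h1 : ¬((σ i).val + 1 < s - 1) := by omega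
  have h2 : ¬(i.val < p - 1) := by omega
  simp only [Matrix.submatrix_apply, genM, if_neg h1, if_neg h2]
  have hlt := i.isLt
  rw [if_neg (by omega), if_neg (by omega)]
end

section
/- Let n ≥ 3, M' the generic antidiagonal-unipotent matrix as above, and N the n×n nilpotent Jordan matrix with 1's on the superdiagonal. Define f_{k,ℓ} to be the (k,ℓ)-entry of (M')^{-1} N M' (over the fraction field, noting all these entries are polynomials). Then for every 1 ≤ ℓ ≤ n−1, f_{ℓ+1,ℓ} = 1. -/
open MvPolynomial

/-- The regular nilpotent Jordan matrix `N`, with `1`'s on the superdiagonal. -/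
noncomputable def nilpMat (K : Type*) [Field K] (n : ℕ) :
    Matrix (Fin n) (Fin n) (MvPolynomial (Fin n × Fin n) K) := fun i j =>
  if (j : ℕ) = (i : ℕ) + 1 then 1 else 0

/-- The matrix `(M')⁻¹ N M'`, whose `(k,ℓ)` entry is the polynomial `f_{k,ℓ}`. -/
noncomputable def hessMat (K : Type*) [Field K] (n : ℕ) :
    Matrix (Fin n) (Fin n) (MvPolynomial (Fin n × Fin n) K) :=
  (genM K n)⁻¹ * nilpMat K n * genM K n

lemma genM_det_isUnit (K : Type*) [Field K] (n : ℕ) : IsUnit (genM K n).det := by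
  have h : genM K n = ((genM K n).submatrix Fin.revPerm id).submatrix Fin.revPerm id := by
    ext i j
    simp [Matrix.submatrix_apply]
  have hlt : ((genM K n).submatrix Fin.revPerm id).BlockTriangular OrderDual.toDual := by
    intro i j hij
    have hij' : (i : Fin n) < j := hij
    simp only [Matrix.submatrix_apply, id, genM, Fin.revPerm_apply, Fin.val_rev]
    have h1 : ¬ (n - ((i : ℕ) + 1)) + (j : ℕ) < n - 1 := by
      have := i.2; have := j.2; have : (i:ℕ) < (j:ℕ) := hij'; omega
    have h2 : ¬ (n - ((i : ℕ) + 1)) + (j : ℕ) = n - 1 := by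
      have := i.2; have := j.2; have : (i:ℕ) < (j:ℕ) := hij'; omega
    rw [if_neg h1, if_neg h2]
  have hdiag : ∀ i : Fin n, ((genM K n).submatrix Fin.revPerm id) i i = 1 := by
    intro i
    simp only [Matrix.submatrix_apply, id, genM, Fin.revPerm_apply, Fin.val_rev]
    have h1 : ¬ (n - ((i : ℕ) + 1)) + (i : ℕ) < n - 1 := by have := i.2; omega
    have h2 : (n - ((i : ℕ) + 1)) + (i : ℕ) = n - 1 := by have := i.2; omega
    rw [if_neg h1, if_pos h2]
  have hdet : ((genM K n).submatrix Fin.revPerm id).det = 1 := by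
    rw [Matrix.det_of_lowerTriangular _ hlt]
    exact Finset.prod_eq_one fun i _ => hdiag i
  have : (genM K n).det = (Equiv.Perm.sign (Fin.revPerm : Equiv.Perm (Fin n)) : ℤ) := by
    conv_lhs => rw [h]
    rw [Matrix.det_permute, hdet, mul_one]
  rw [this]
  rcases Int.units_eq_one_or (Equiv.Perm.sign (Fin.revPerm : Equiv.Perm (Fin n))) with h1 | h1 <;>
    rw [h1] <;> simp

lemma key_eq (K : Type*) [Field K] (n : ℕ) :
    genM K n * hessMat K n = nilpMat K n * genM K n := by
  rw [hessMat, ← Matrix.mul_assoc, ← Matrix.mul_assoc,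
    Matrix.mul_nonsing_inv _ (genM_det_isUnit K n), Matrix.one_mul]

lemma row_eq (K : Type*) [Field K] (n : ℕ) (i j : Fin n) :
    ∑ m, genM K n i m * hessMat K n m j =
      if h : (i : ℕ) + 1 < n then genM K n ⟨(i : ℕ) + 1, h⟩ j else 0 := by
  have := congrFun (congrFun (key_eq K n) i) j
  rw [Matrix.mul_apply, Matrix.mul_apply] at this
  rw [this]
  by_cases h : (i : ℕ) + 1 < n
  · rw [dif_pos h]
    rw [Finset.sum_eq_single (⟨(i : ℕ) + 1, h⟩ : Fin n)]
    · simp [nilpMat]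
    · intro b _ hb
      have : ¬ ((b : ℕ) = (i : ℕ) + 1) := fun hc => hb (Fin.ext hc)
      simp [nilpMat, this]
    · simp
  · rw [dif_neg h]
    apply Finset.sum_eq_zero
    intro b _
    have : ¬ ((b : ℕ) = (i : ℕ) + 1) := by have := b.2; omega
    simp [nilpMat, this]

lemma hess_upper_zero (K : Type*) [Field K] {n : ℕ} (hn : 3 ≤ n) :
    ∀ k : ℕ, ∀ hk : k < n, ∀ j : Fin n, k ≤ (j : ℕ) →
      hessMat K n ⟨k, hk⟩ j = 0 := by
  intro k
  induction k using Nat.strong_induction_on with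
  | _ k ih =>
    intro hk j hkj
    have hi : n - 1 - k < n := by omega
    have hrow := row_eq K n ⟨n - 1 - k, hi⟩ j
    have hrhs : (if h : (n - 1 - k) + 1 < n then genM K n ⟨(n - 1 - k) + 1, h⟩ j else 0) = 0 := by
      by_cases h : (n - 1 - k) + 1 < n
      · rw [dif_pos h]
        have := j.2
        have h1 : ¬ ((n - 1 - k) + 1 + (j : ℕ) < n - 1) := by omega
        have h2 : ¬ ((n - 1 - k) + 1 + (j : ℕ) = n - 1) := by omega
        simp [genM, h1, h2]
      · rw [dif_neg h]
    rw [hrhs] at hrow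
    have hsum : ∑ m, genM K n ⟨n - 1 - k, hi⟩ m * hessMat K n m j
        = hessMat K n ⟨k, hk⟩ j := by
      rw [Finset.sum_eq_single (⟨k, hk⟩ : Fin n)]
      · have h1 : ¬ ((n - 1 - k) + k < n - 1) := by omega
        have h2 : (n - 1 - k) + k = n - 1 := by omega
        simp [genM, h1, h2]
      · intro b _ hb
        rcases lt_or_gt_of_ne (fun hc : (b : ℕ) = k => hb (Fin.ext hc)) with hbk | hbk
        · rw [ih b hbk (by omega) j (by omega), mul_zero]
        · have := b.2
          have h1 : ¬ ((n - 1 - k) + (b : ℕ) < n - 1) := by omega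
          have h2 : ¬ ((n - 1 - k) + (b : ℕ) = n - 1) := by omega
          simp [genM, h1, h2]
      · simp
    rw [hsum] at hrow
    exact hrow

/-- For `1 ≤ ℓ ≤ n - 1` (1-indexed), `f_{ℓ+1,ℓ} = 1`.
In 0-indexed terms, the entry of `(M')⁻¹ N M'` at row `ℓ`, column `ℓ - 1`
is `1`. -/
theorem stmt5 {K : Type*} [Field K] {n : ℕ} (hn : 3 ≤ n)
    (l : ℕ) (hl1 : 1 ≤ l) (hln : l ≤ n - 1) :
    hessMat K n ⟨l, by omega⟩ ⟨l - 1, by omega⟩ = 1 := by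
  have hi : n - 1 - l < n := by omega
  have hj : l - 1 < n := by omega
  have hrow := row_eq K n ⟨n - 1 - l, hi⟩ ⟨l - 1, hj⟩
  have hrhs : (if h : (n - 1 - l) + 1 < n then genM K n ⟨(n - 1 - l) + 1, h⟩ ⟨l - 1, hj⟩ else 0)
      = 1 := by
    have h : (n - 1 - l) + 1 < n := by omega
    rw [dif_pos h]
    have h1 : ¬ ((n - 1 - l) + 1 + (l - 1) < n - 1) := by omega
    have h2 : (n - 1 - l) + 1 + (l - 1) = n - 1 := by omega
    simp [genM, h1, h2]
  rw [hrhs] at hrow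
  have hsum : ∑ m, genM K n ⟨n - 1 - l, hi⟩ m * hessMat K n m ⟨l - 1, hj⟩
      = hessMat K n ⟨l, by omega⟩ ⟨l - 1, hj⟩ := by
    rw [Finset.sum_eq_single (⟨l, by omega⟩ : Fin n)]
    · have h1 : ¬ ((n - 1 - l) + l < n - 1) := by omega
      have h2 : (n - 1 - l) + l = n - 1 := by omega
      simp [genM, h1, h2]
    · intro b _ hb
      rcases lt_or_gt_of_ne (fun hc : (b : ℕ) = l => hb (Fin.ext hc)) with hbl | hbl
      · rw [hess_upper_zero K hn b b.2 ⟨l - 1, hj⟩ (by simpa using by omega), mul_zero]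
      · have := b.2
        have h1 : ¬ ((n - 1 - l) + (b : ℕ) < n - 1) := by omega
        have h2 : ¬ ((n - 1 - l) + (b : ℕ) = n - 1) := by omega
        simp [genM, h1, h2]
    · simp
  rw [hsum] at hrow
  exact hrow
end
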